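/- Let 0 < p < 1, q = 1−p, α = p/q, and let n ≥ 2t+1 ≥ 3 with u + v ≥ 2t + 1 for positive integers u ≤ v. If A ⊆ F^u and B ⊆ F^v (i.e., every walk in A hits the line y = x + u and every walk in B hits y = x + v), then μ_p(A)·μ_p(B) ≤ α^{2t+1}, provided p < 1/2. -/

import Mathlib

open Finset

noncomputable def mu (n : ℕ) (p : ℝ) (𝒜 : Finset (Finset (Fin n))) : ℝ :=
  ∑ A ∈ 𝒜, p ^ A.card * (1 - p) ^ (n - A.card)

/-- The family `F^ℓ` of subsets of `[n]` whose walk hits the line `y = x + ℓ`. -/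
def FamLine (n ℓ : ℕ) : Finset (Finset (Fin n)) :=
  Finset.univ.filter (fun F => ∃ j ≤ n,
    ℓ + j ≤ (F.filter (fun i => i.val < ℓ + 2 * j)).card)

/-! ### Auxiliary lemmas -/

def shiftF (n : ℕ) (F : Finset (Fin (n+1))) : Finset (Fin n) :=
  univ.filter (fun i => i.succ ∈ F)

lemma mem_shiftF {n : ℕ} {F : Finset (Fin (n+1))} {i : Fin n} :
    i ∈ shiftF n F ↔ i.succ ∈ F := by simp [shiftF]

lemma shiftF_inj {n : ℕ} {F G : Finset (Fin (n+1))}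
    (h0 : ((0 : Fin (n+1)) ∈ F) ↔ ((0 : Fin (n+1)) ∈ G))
    (h : shiftF n F = shiftF n G) : F = G := by
  ext i
  induction i using Fin.cases with
  | zero => exact h0
  | succ j => rw [← mem_shiftF, ← mem_shiftF, h]

lemma mapA {n : ℕ} (F : Finset (Fin (n+1))) (m : ℕ) :
    ((shiftF n F).filter (fun i => i.val < m)).map (Fin.succEmb n) =
    (F.filter (fun i => i.val < m+1)).erase 0 := by
  ext i
  induction i using Fin.cases with
  | zero => simp [Fin.succ_ne_zero]
  | succ j =>
      simp [mem_shiftF, Fin.succ_ne_zero, Fin.succ_inj, Fin.val_succ, Fin.succEmb]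

lemma countA {n : ℕ} (F : Finset (Fin (n+1))) (m : ℕ) :
    (F.filter (fun i => i.val < m+1)).card =
    ((shiftF n F).filter (fun i => i.val < m)).card +
      (if (0 : Fin (n+1)) ∈ F then 1 else 0) := by
  have h := congrArg Finset.card (mapA F m)
  rw [Finset.card_map] at h
  by_cases h0 : (0 : Fin (n+1)) ∈ F
  · have h0' : (0 : Fin (n+1)) ∈ F.filter (fun i => i.val < m+1) := by simp [h0]
    rw [Finset.card_erase_of_mem h0'] at h
    have hpos : 1 ≤ (F.filter (fun i => i.val < m+1)).card :=
      Finset.card_pos.mpr ⟨_, h0'⟩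
    simp only [h0, if_true]
    omega
  · have : (0 : Fin (n+1)) ∉ F.filter (fun i => i.val < m+1) := by simp [h0]
    rw [Finset.erase_eq_of_notMem this] at h
    simp only [h0, if_false, add_zero]
    exact h.symm

lemma card_filter_lt {n : ℕ} (s : Finset (Fin n)) (m : ℕ) :
    (s.filter (fun i => i.val < m)).card ≤ m := by
  have h1 : (s.filter (fun i => i.val < m)).card
      = ((s.filter (fun i => i.val < m)).image Fin.val).card :=
    (Finset.card_image_of_injective _ Fin.val_injective).symm
  have h2 : ((s.filter (fun i => i.val < m)).image Fin.val) ⊆ Finset.range m := by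
    intro x hx
    simp only [Finset.mem_image, Finset.mem_filter] at hx
    obtain ⟨a, ⟨_, ha⟩, rfl⟩ := hx
    simpa using ha
  calc _ = _ := h1
    _ ≤ (Finset.range m).card := Finset.card_le_card h2
    _ = m := Finset.card_range m

lemma cardshift {n : ℕ} (F : Finset (Fin (n+1))) :
    F.card = (shiftF n F).card + (if (0 : Fin (n+1)) ∈ F then 1 else 0) := by
  have h := countA F n
  have h1 : F.filter (fun i => i.val < n+1) = F :=
    Finset.filter_true_of_mem (fun i _ => i.isLt)
  have h2 : (shiftF n F).filter (fun i => i.val < n) = shiftF n F :=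
    Finset.filter_true_of_mem (fun i _ => i.isLt)
  rw [h1, h2] at h
  exact h

lemma cardshift_le {n : ℕ} (F : Finset (Fin (n+1))) : (shiftF n F).card ≤ n := by
  simpa using Finset.card_le_card (Finset.subset_univ (shiftF n F))

lemma mem_FamLine {n ℓ : ℕ} {F : Finset (Fin n)} :
    F ∈ FamLine n ℓ ↔ ∃ j ≤ n, ℓ + j ≤ (F.filter (fun i => i.val < ℓ + 2 * j)).card := by
  simp [FamLine]

lemma mem1 {n ℓ : ℕ} (hl : 1 ≤ ℓ) {F : Finset (Fin (n+1))}
    (hF : F ∈ FamLine (n+1) ℓ) (h0 : (0 : Fin (n+1)) ∈ F) :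
    shiftF n F ∈ FamLine n (ℓ - 1) := by
  obtain ⟨k, rfl⟩ : ∃ k, ℓ = k + 1 := ⟨ℓ - 1, by omega⟩
  obtain ⟨j, hj, hcard⟩ := mem_FamLine.mp hF
  have e1 : k + 1 + 2 * j = (k + 2 * j) + 1 := by omega
  rw [e1, countA F (k + 2 * j)] at hcard
  simp only [h0, if_true] at hcard
  have hle : ((shiftF n F).filter (fun i => i.val < k + 2 * j)).card ≤ n :=
    le_trans (Finset.card_filter_le _ _) (cardshift_le F)
  refine mem_FamLine.mpr ⟨j, by omega, ?_⟩
  have e2 : k + 1 - 1 + 2 * j = k + 2 * j := by omega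
  rw [e2]
  omega

lemma mem2 {n ℓ : ℕ} (hl : 1 ≤ ℓ) {F : Finset (Fin (n+1))}
    (hF : F ∈ FamLine (n+1) ℓ) (h0 : (0 : Fin (n+1)) ∉ F) :
    shiftF n F ∈ FamLine n (ℓ + 1) := by
  obtain ⟨k, rfl⟩ : ∃ k, ℓ = k + 1 := ⟨ℓ - 1, by omega⟩
  obtain ⟨j, hj, hcard⟩ := mem_FamLine.mp hF
  have e1 : k + 1 + 2 * j = (k + 2 * j) + 1 := by omega
  rw [e1, countA F (k + 2 * j)] at hcard
  simp only [h0, if_false] at hcard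
  rcases Nat.eq_zero_or_pos j with rfl | hjpos
  · exfalso
    have := card_filter_lt (shiftF n F) (k + 2 * 0)
    omega
  obtain ⟨j', rfl⟩ : ∃ j', j = j' + 1 := ⟨j - 1, by omega⟩
  refine mem_FamLine.mpr ⟨j', by omega, ?_⟩
  have e2 : k + 1 + 1 + 2 * j' = k + 2 * (j' + 1) := by omega
  rw [e2]
  omega

lemma mu_nonneg {n : ℕ} {p : ℝ} (hp0 : 0 ≤ p) (hp1 : p ≤ 1) (𝒜 : Finset (Finset (Fin n))) :
    0 ≤ mu n p 𝒜 :=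
  Finset.sum_nonneg fun A _ => mul_nonneg (pow_nonneg hp0 _) (pow_nonneg (by linarith) _)

lemma mu_mono {n : ℕ} {p : ℝ} (hp0 : 0 ≤ p) (hp1 : p ≤ 1)
    {𝒜 ℬ : Finset (Finset (Fin n))} (h : 𝒜 ⊆ ℬ) : mu n p 𝒜 ≤ mu n p ℬ :=
  Finset.sum_le_sum_of_subset_of_nonneg h
    (fun A _ _ => mul_nonneg (pow_nonneg hp0 _) (pow_nonneg (by linarith) _))

lemma mu_univ {n : ℕ} {p : ℝ} : mu n p (univ : Finset (Finset (Fin n))) = 1 := by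
  have h := Finset.prod_add (fun _ : Fin n => p) (fun _ : Fin n => (1 - p)) univ
  simp only [Finset.prod_const, Finset.card_univ, Fintype.card_fin] at h
  have h2 : ∀ t ∈ (univ : Finset (Fin n)).powerset,
      p ^ t.card * (1-p) ^ (univ \ t).card = p ^ t.card * (1-p) ^ (n - t.card) := by
    intro t _
    rw [Finset.card_sdiff_of_subset (Finset.subset_univ t), Finset.card_univ, Fintype.card_fin]
  rw [Finset.sum_congr rfl h2] at h
  have hpq : p + (1 - p) = 1 := by ring
  rw [hpq, one_pow] at h
  unfold mu
  rw [Finset.powerset_univ] at h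
  exact h.symm

lemma key (p : ℝ) (hp0 : 0 < p) (hp1 : p < 1) :
    ∀ n ℓ, mu n p (FamLine n ℓ) ≤ (p / (1 - p)) ^ ℓ := by
  have hq : (0:ℝ) < 1 - p := by linarith
  have hα0 : 0 ≤ p / (1 - p) := div_nonneg hp0.le hq.le
  intro n
  induction n with
  | zero =>
      intro ℓ
      rcases Nat.eq_zero_or_pos ℓ with rfl | hl
      · calc mu 0 p (FamLine 0 0) ≤ mu 0 p univ :=
              mu_mono hp0.le hp1.le (Finset.subset_univ _)
          _ = 1 := mu_univ
          _ = _ := by norm_num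
      · have hempty : FamLine 0 ℓ = ∅ := by
          ext F
          simp only [mem_FamLine, Finset.notMem_empty, iff_false, not_exists]
          intro j hj
          have h1 : (F.filter (fun i => i.val < ℓ + 2 * j)).card ≤ F.card :=
            Finset.card_filter_le _ _
          have h2 : F.card ≤ 0 := by
            simpa using Finset.card_le_card (Finset.subset_univ F)
          omega
        rw [hempty]
        simp only [mu, Finset.sum_empty]
        positivity
  | succ n ih =>
      intro ℓ
      rcases Nat.eq_zero_or_pos ℓ with rfl | hl
      · calc mu (n+1) p (FamLine (n+1) 0) ≤ mu (n+1) p univ :=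
              mu_mono hp0.le hp1.le (Finset.subset_univ _)
          _ = 1 := mu_univ
          _ = _ := by norm_num
      · set α := p / (1 - p) with hα
        set S := FamLine (n+1) ℓ with hS
        set f : Finset (Fin (n+1)) → ℝ :=
          fun A => p ^ A.card * (1 - p) ^ (n + 1 - A.card) with hf
        set g : Finset (Fin n) → ℝ :=
          fun A => p ^ A.card * (1 - p) ^ (n - A.card) with hg
        have hgnn : ∀ A, 0 ≤ g A := fun A =>
          mul_nonneg (pow_nonneg hp0.le _) (pow_nonneg hq.le _)
        have hsplit : mu (n+1) p S
            = ∑ F ∈ S.filter (fun F => (0 : Fin (n+1)) ∈ F), f F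
            + ∑ F ∈ S.filter (fun F => ¬ ((0 : Fin (n+1)) ∈ F)), f F := by
          rw [Finset.sum_filter_add_sum_filter_not]
          rfl
        -- part 1
        have hpart1 : ∑ F ∈ S.filter (fun F => (0 : Fin (n+1)) ∈ F), f F
            ≤ p * mu n p (FamLine n (ℓ - 1)) := by
          have hinj : Set.InjOn (shiftF n) (S.filter (fun F => (0 : Fin (n+1)) ∈ F)) := by
            intro F hF G hG h
            simp only [Finset.coe_filter, Set.mem_setOf_eq] at hF hG
            exact shiftF_inj (by simp [hF.2, hG.2]) h
          have heq : ∑ F ∈ S.filter (fun F => (0 : Fin (n+1)) ∈ F), f F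
              = ∑ G ∈ (S.filter (fun F => (0 : Fin (n+1)) ∈ F)).image (shiftF n),
                  p * g G := by
            rw [Finset.sum_image (fun F hF G hG h => hinj hF hG h)]
            refine Finset.sum_congr rfl ?_
            intro F hF
            rw [Finset.mem_filter] at hF
            have hc := cardshift F
            rw [if_pos hF.2] at hc
            have hle := cardshift_le F
            simp only [hf, hg, hc]
            have e : n + 1 - ((shiftF n F).card + 1) = n - (shiftF n F).card := by omega
            rw [e]
            ring
          rw [heq]
          have hsub : (S.filter (fun F => (0 : Fin (n+1)) ∈ F)).image (shiftF n)
              ⊆ FamLine n (ℓ - 1) := by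
            intro G hG
            obtain ⟨F, hF, rfl⟩ := Finset.mem_image.mp hG
            rw [Finset.mem_filter] at hF
            exact mem1 hl hF.1 hF.2
          calc _ ≤ ∑ G ∈ FamLine n (ℓ - 1), p * g G :=
                Finset.sum_le_sum_of_subset_of_nonneg hsub
                  (fun G _ _ => mul_nonneg hp0.le (hgnn G))
            _ = p * mu n p (FamLine n (ℓ - 1)) := by
                rw [← Finset.mul_sum]; rfl
        -- part 2
        have hpart2 : ∑ F ∈ S.filter (fun F => ¬ ((0 : Fin (n+1)) ∈ F)), f F
            ≤ (1 - p) * mu n p (FamLine n (ℓ + 1)) := by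
          have hinj : Set.InjOn (shiftF n)
              (S.filter (fun F => ¬ ((0 : Fin (n+1)) ∈ F))) := by
            intro F hF G hG h
            simp only [Finset.coe_filter, Set.mem_setOf_eq] at hF hG
            exact shiftF_inj (by simp [hF.2, hG.2]) h
          have heq : ∑ F ∈ S.filter (fun F => ¬ ((0 : Fin (n+1)) ∈ F)), f F
              = ∑ G ∈ (S.filter (fun F => ¬ ((0 : Fin (n+1)) ∈ F))).image (shiftF n),
                  (1 - p) * g G := by
            rw [Finset.sum_image (fun F hF G hG h => hinj hF hG h)]
            refine Finset.sum_congr rfl ?_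
            intro F hF
            rw [Finset.mem_filter] at hF
            have hc := cardshift F
            rw [if_neg hF.2] at hc
            have hle := cardshift_le F
            simp only [hf, hg, hc, add_zero]
            have e : n + 1 - (shiftF n F).card = (n - (shiftF n F).card) + 1 := by
              omega
            rw [e, pow_succ]
            ring
          rw [heq]
          have hsub : (S.filter (fun F => ¬ ((0 : Fin (n+1)) ∈ F))).image (shiftF n)
              ⊆ FamLine n (ℓ + 1) := by
            intro G hG
            obtain ⟨F, hF, rfl⟩ := Finset.mem_image.mp hG
            rw [Finset.mem_filter] at hF
            exact mem2 hl hF.1 hF.2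
          calc _ ≤ ∑ G ∈ FamLine n (ℓ + 1), (1 - p) * g G :=
                Finset.sum_le_sum_of_subset_of_nonneg hsub
                  (fun G _ _ => mul_nonneg hq.le (hgnn G))
            _ = (1 - p) * mu n p (FamLine n (ℓ + 1)) := by
                rw [← Finset.mul_sum]; rfl
        -- combine
        obtain ⟨k, rfl⟩ : ∃ k, ℓ = k + 1 := ⟨ℓ - 1, by omega⟩
        have h1 : mu n p (FamLine n (k + 1 - 1)) ≤ α ^ k := by
          simpa using ih (k + 1 - 1)
        have h2 : mu n p (FamLine n (k + 1 + 1)) ≤ α ^ (k + 2) := ih (k + 2)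
        have halg : p * α ^ k + (1 - p) * α ^ (k + 2) = α ^ (k + 1) := by
          have hq' : (1 : ℝ) - p ≠ 0 := ne_of_gt hq
          have hstep : p + (1 - p) * α ^ 2 = α := by
            rw [hα]; field_simp; ring
          calc p * α ^ k + (1 - p) * α ^ (k + 2)
              = (p + (1 - p) * α ^ 2) * α ^ k := by ring
            _ = α * α ^ k := by rw [hstep]
            _ = α ^ (k + 1) := by ring
        calc mu (n+1) p S ≤ p * mu n p (FamLine n (k + 1 - 1))
              + (1 - p) * mu n p (FamLine n (k + 1 + 1)) := by
              rw [hsplit]; exact add_le_add hpart1 hpart2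
          _ ≤ p * α ^ k + (1 - p) * α ^ (k + 2) := by
              have := mu_nonneg hp0.le hp1.le (FamLine n (k + 1 - 1))
              nlinarith [mul_le_mul_of_nonneg_left h1 hp0.le,
                mul_le_mul_of_nonneg_left h2 hq.le]
          _ = α ^ (k + 1) := halg

theorem stmt19 (n t u v : ℕ) (hu : 1 ≤ u) (huv : u ≤ v)
    (huvt : 2 * t + 1 ≤ u + v) (hn : 2 * t + 1 ≤ n) (hn3 : 3 ≤ 2 * t + 1)
    (p : ℝ) (hp0 : 0 < p) (hp : p < 1 / 2)
    (𝒜 ℬ : Finset (Finset (Fin n)))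
    (h𝒜 : 𝒜 ⊆ FamLine n u) (hℬ : ℬ ⊆ FamLine n v) :
    mu n p 𝒜 * mu n p ℬ ≤ (p / (1 - p)) ^ (2 * t + 1) := by
  have hp1 : p < 1 := by linarith
  have hq : (0:ℝ) < 1 - p := by linarith
  set α := p / (1 - p) with hα
  have hα0 : 0 ≤ α := div_nonneg hp0.le hq.le
  have hα1 : α ≤ 1 := by
    rw [hα, div_le_one hq]; linarith
  have hA : mu n p 𝒜 ≤ α ^ u :=
    le_trans (mu_mono hp0.le hp1.le h𝒜) (key p hp0 hp1 n u)
  have hB : mu n p ℬ ≤ α ^ v :=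
    le_trans (mu_mono hp0.le hp1.le hℬ) (key p hp0 hp1 n v)
  have hAnn := mu_nonneg hp0.le hp1.le 𝒜
  have hBnn := mu_nonneg hp0.le hp1.le ℬ
  calc mu n p 𝒜 * mu n p ℬ ≤ α ^ u * α ^ v :=
        mul_le_mul hA hB hBnn (pow_nonneg hα0 _)
    _ = α ^ (u + v) := (pow_add α u v).symm
    _ ≤ α ^ (2 * t + 1) := pow_le_pow_of_le_one hα0 hα1 huvt
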